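/- arXiv:2302.13077 — 2 statements merged into one kernel-verified Lean document; each statement's English description precedes it below -/
import Mathlib

section
/- Let 1 < q < p be real numbers, and let u, v > 0 and A, B ≥ 0 be real numbers. Then q·(v/u)^(q-1)·A^(p-1)·B ≤ (q-1)·(v/u)^q·A^p + ((p-q)/p)·A^p + (q/p)·B^p. -/
open Real

theorem young_type_ineq_qp (p q u v A B : ℝ) (hq : 1 < q) (hqp : q < p)
    (hu : 0 < u) (hv : 0 < v) (hA : 0 ≤ A) (hB : 0 ≤ B) :
    q * (v / u) ^ (q - 1) * A ^ (p - 1) * B ≤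
      (q - 1) * (v / u) ^ q * A ^ p + ((p - q) / p) * A ^ p + (q / p) * B ^ p := by
  have hp : 1 < p := hq.trans hqp
  have hp0 : (0:ℝ) < p := by linarith
  have hp1 : (0:ℝ) < p - 1 := by linarith
  have hq0 : (0:ℝ) < q := by linarith
  have hq1 : (0:ℝ) < q - 1 := by linarith
  have hpq0 : (0:ℝ) < p - q := by linarith
  have hp0' : p ≠ 0 := hp0.ne'
  have hp1' : p - 1 ≠ 0 := hp1.ne'
  have hq0' : q ≠ 0 := hq0.ne'
  have hq1' : q - 1 ≠ 0 := hq1.ne'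
  have hpq0' : p - q ≠ 0 := hpq0.ne'
  set t : ℝ := v / u with htdef
  have ht : 0 < t := div_pos hv hu
  -- first Young: exponents p/(p-1) and p
  have hc : (p / (p - 1)).HolderConjugate p := by
    rw [Real.holderConjugate_iff]
    constructor
    · rw [lt_div_iff₀ hp1]; linarith
    · field_simp; ring
  have h1 := Real.young_inequality_of_nonneg (a := t ^ (q - 1) * A ^ (p - 1)) (b := B)
    (mul_nonneg (Real.rpow_pos_of_pos ht (q - 1)).le (Real.rpow_nonneg hA (p - 1))) hB hc
  set α : ℝ := (q - 1) * (p / (p - 1)) with hαdef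
  have hα : 0 < α := by positivity
  have hx : (t ^ (q - 1) * A ^ (p - 1)) ^ (p / (p - 1)) = t ^ α * A ^ p := by
    rw [Real.mul_rpow (Real.rpow_pos_of_pos ht _).le (Real.rpow_nonneg hA _),
      ← Real.rpow_mul ht.le, ← Real.rpow_mul hA]
    congr 2
    field_simp
  rw [hx] at h1
  -- second Young: exponents r and s
  set r : ℝ := q * (p - 1) / (p * (q - 1)) with hrdef
  set s : ℝ := q * (p - 1) / (p - q) with hsdef
  have hr1 : 1 < r := by
    rw [hrdef, lt_div_iff₀ (by positivity)]; nlinarith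
  have hr0 : (0:ℝ) < r := by linarith
  have hs0 : (0:ℝ) < s := by rw [hsdef]; positivity
  have hc2 : r.HolderConjugate s := by
    refine Real.holderConjugate_iff.mpr ⟨hr1, ?_⟩
    rw [hrdef, hsdef]
    field_simp
    ring
  have h2 := Real.young_inequality_of_nonneg (a := t ^ α) (b := (1:ℝ))
    (Real.rpow_pos_of_pos ht α).le zero_le_one hc2
  have hxy : (t ^ α) ^ r = t ^ q := by
    rw [← Real.rpow_mul ht.le]
    congr 1
    rw [hαdef, hrdef]
    field_simp
  rw [hxy, Real.one_rpow] at h2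
  rw [mul_one] at h2
  -- multiply h2 by c = q(p-1)/p
  have hc0 : (0:ℝ) < q * (p - 1) / p := by positivity
  have key2 : q * (p - 1) / p * t ^ α ≤ (q - 1) * t ^ q + (p - q) / p := by
    have h := mul_le_mul_of_nonneg_left h2 hc0.le
    have e : q * (p - 1) / p * (t ^ q / r + 1 / s) = (q - 1) * t ^ q + (p - q) / p := by
      rw [hrdef, hsdef]
      field_simp
    linarith [e ▸ h]
  have hApos : (0:ℝ) ≤ A ^ p := Real.rpow_nonneg hA _
  have h3 : q * (p - 1) / p * (t ^ α * A ^ p) ≤ ((q - 1) * t ^ q + (p - q) / p) * A ^ p := by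
    have := mul_le_mul_of_nonneg_right key2 hApos
    calc q * (p - 1) / p * (t ^ α * A ^ p) = q * (p - 1) / p * t ^ α * A ^ p := by ring
      _ ≤ ((q - 1) * t ^ q + (p - q) / p) * A ^ p := this
  have h1' : q * (t ^ (q - 1) * A ^ (p - 1) * B)
      ≤ q * (p - 1) / p * (t ^ α * A ^ p) + q / p * B ^ p := by
    have h := mul_le_mul_of_nonneg_left h1 hq0.le
    have e : q * (t ^ α * A ^ p / (p / (p - 1)) + B ^ p / p)
        = q * (p - 1) / p * (t ^ α * A ^ p) + q / p * B ^ p := by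
      field_simp
    linarith [e ▸ h]
  nlinarith [h1', h3]
end

section
/- Let 1 < q < ∞ and let u, v be positive differentiable functions on an open set Ω ⊆ ℝ^N. Define the Picone integrand R(u,v)(x) = (1 + (q−1)(v/u)^q)|∇u|^q − q(v/u)^(q−1)|∇u|^(q−2)(∇u·∇v) + (1 + (q−1)(u/v)^q)|∇v|^q − q(u/v)^(q−1)|∇v|^(q−2)(∇v·∇u). Then R(u,v)(x) ≥ 0 at every point x, and R(u,v)(x) = 0 if and only if u(x)∇v(x) = v(x)∇u(x). -/
open Real RealInnerProductSpace

private lemma rpow_sub_one_mul (a q : ℝ) (hq : 1 < q) (ha : 0 ≤ a) :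
    a ^ (q - 1) = a ^ (q - 2) * a := by
  rcases ha.lt_or_eq with h | h
  · rw [show q - 1 = (q - 2) + 1 by ring, Real.rpow_add h, Real.rpow_one]
  · rw [← h, Real.zero_rpow (by linarith : q - 1 ≠ 0), mul_zero]

private lemma young_aux (q : ℝ) (hq : 1 < q) (X B : ℝ) (hX : 0 ≤ X) (hB : 0 ≤ B) :
    0 ≤ (q - 1) * X ^ q + B ^ q - q * X ^ (q - 1) * B ∧
      ((q - 1) * X ^ q + B ^ q - q * X ^ (q - 1) * B = 0 ↔ X = B) := by
  rcases hX.lt_or_eq with hX0 | hX0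
  · -- X > 0
    set s : ℝ := B / X - 1 with hs
    have hs1 : -1 ≤ s := by
      have : 0 ≤ B / X := div_nonneg hB hX0.le
      simp only [hs]; linarith
    have hBX : B = X * (1 + s) := by
      rw [hs]; field_simp; ring
    have h1s : 0 ≤ 1 + s := by
      have : 0 ≤ B / X := div_nonneg hB hX0.le
      simp only [hs]; linarith
    have hBq : B ^ q = X ^ q * (1 + s) ^ q := by
      rw [hBX, Real.mul_rpow hX0.le h1s]
    have hXq : X ^ (q - 1) * X = X ^ q := by
      conv_rhs => rw [show q = (q - 1) + 1 by ring]
      rw [Real.rpow_add hX0, Real.rpow_one]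
    have hkey : (q - 1) * X ^ q + B ^ q - q * X ^ (q - 1) * B
        = X ^ q * ((1 + s) ^ q - (1 + q * s)) := by
      rw [hBq, hBX]
      have : q * X ^ (q - 1) * (X * (1 + s)) = q * (X ^ (q - 1) * X) * (1 + s) := by ring
      rw [this, hXq]; ring
    have hXqpos : 0 < X ^ q := Real.rpow_pos_of_pos hX0 q
    have hbern : 1 + q * s ≤ (1 + s) ^ q := one_add_mul_self_le_rpow_one_add hs1 hq.le
    constructor
    · rw [hkey]
      exact mul_nonneg hXqpos.le (by linarith)
    · rw [hkey]
      constructor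
      · intro h
        have h2 : (1 + s) ^ q - (1 + q * s) = 0 := by
          rcases mul_eq_zero.mp h with h' | h'
          · exact absurd h' hXqpos.ne'
          · exact h'
        have hs0 : s = 0 := by
          by_contra hs'
          have := one_add_mul_self_lt_rpow_one_add hs1 hs' hq
          linarith
        rw [hBX, hs0]; ring
      · intro h
        have hs0 : s = 0 := by
          have : B / X = 1 := by rw [← h, div_self hX0.ne']
          simp [hs, this]
        rw [hs0]
        simp
  · -- X = 0
    rw [← hX0, Real.zero_rpow (by linarith : q ≠ 0),
      Real.zero_rpow (by linarith : q - 1 ≠ 0)]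
    constructor
    · have : 0 ≤ B ^ q := Real.rpow_nonneg hB q
      linarith
    · rw [show (q - 1) * 0 + B ^ q - q * 0 * B = B ^ q by ring]
      rw [Real.rpow_eq_zero hB (by linarith : q ≠ 0)]
      exact eq_comm

theorem picone_integrand_nonneg (N : ℕ) (q : ℝ) (hq : 1 < q)
    (Ω : Set (EuclideanSpace ℝ (Fin N))) (hΩ : IsOpen Ω)
    (u v : EuclideanSpace ℝ (Fin N) → ℝ)
    (hu : DifferentiableOn ℝ u Ω) (hv : DifferentiableOn ℝ v Ω)
    (hupos : ∀ x ∈ Ω, 0 < u x) (hvpos : ∀ x ∈ Ω, 0 < v x) :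
    ∀ x ∈ Ω,
      0 ≤ (1 + (q - 1) * (v x / u x) ^ q) * ‖gradient u x‖ ^ q -
            q * (v x / u x) ^ (q - 1) * ‖gradient u x‖ ^ (q - 2) *
              ⟪gradient u x, gradient v x⟫ +
          ((1 + (q - 1) * (u x / v x) ^ q) * ‖gradient v x‖ ^ q -
            q * (u x / v x) ^ (q - 1) * ‖gradient v x‖ ^ (q - 2) *
              ⟪gradient v x, gradient u x⟫) ∧
      ((1 + (q - 1) * (v x / u x) ^ q) * ‖gradient u x‖ ^ q -
            q * (v x / u x) ^ (q - 1) * ‖gradient u x‖ ^ (q - 2) *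
              ⟪gradient u x, gradient v x⟫ +
          ((1 + (q - 1) * (u x / v x) ^ q) * ‖gradient v x‖ ^ q -
            q * (u x / v x) ^ (q - 1) * ‖gradient v x‖ ^ (q - 2) *
              ⟪gradient v x, gradient u x⟫) = 0 ↔
        u x • gradient v x = v x • gradient u x) := by
  intro x hx
  have hu0 : 0 < u x := hupos x hx
  have hv0 : 0 < v x := hvpos x hx
  set G := gradient u x with hG
  set H := gradient v x with hH
  set a := ‖G‖ with ha
  set b := ‖H‖ with hb
  set t := v x / u x with ht
  set s := u x / v x with hsdef
  have htpos : 0 < t := div_pos hv0 hu0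
  have hspos : 0 < s := div_pos hu0 hv0
  have hts : t * s = 1 := by
    rw [ht, hsdef, div_mul_div_comm, mul_comm (v x), div_self (mul_pos hu0 hv0).ne']
  have ha0 : 0 ≤ a := norm_nonneg _
  have hb0 : 0 ≤ b := norm_nonneg _
  set P := ⟪G, H⟫ with hP
  have hPsym : ⟪H, G⟫ = P := real_inner_comm _ _
  rw [hPsym]
  -- key rewrites
  have hta : (t * a) ^ q = t ^ q * a ^ q := Real.mul_rpow htpos.le ha0
  have hta' : (t * a) ^ (q - 1) = t ^ (q - 1) * a ^ (q - 1) :=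
    Real.mul_rpow htpos.le ha0
  have hsb : (s * b) ^ q = s ^ q * b ^ q := Real.mul_rpow hspos.le hb0
  have hsb' : (s * b) ^ (q - 1) = s ^ (q - 1) * b ^ (q - 1) :=
    Real.mul_rpow hspos.le hb0
  have haq : a ^ (q - 1) = a ^ (q - 2) * a := rpow_sub_one_mul a q hq ha0
  have hbq : b ^ (q - 1) = b ^ (q - 2) * b := rpow_sub_one_mul b q hq hb0
  obtain ⟨hT1n, hT1e⟩ := young_aux q hq (t * a) b (mul_nonneg htpos.le ha0) hb0
  obtain ⟨hT2n, hT2e⟩ := young_aux q hq (s * b) a (mul_nonneg hspos.le hb0) ha0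
  have hCS : P ≤ a * b := real_inner_le_norm G H
  have hC1n : 0 ≤ q * t ^ (q - 1) * a ^ (q - 2) * (a * b - P) := by
    apply mul_nonneg
    · apply mul_nonneg (mul_nonneg (by linarith) (Real.rpow_nonneg htpos.le _))
        (Real.rpow_nonneg ha0 _)
    · linarith
  have hC2n : 0 ≤ q * s ^ (q - 1) * b ^ (q - 2) * (a * b - P) := by
    apply mul_nonneg
    · apply mul_nonneg (mul_nonneg (by linarith) (Real.rpow_nonneg hspos.le _))
        (Real.rpow_nonneg hb0 _)
    · linarith
  have hE : (1 + (q - 1) * t ^ q) * a ^ q -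
        q * t ^ (q - 1) * a ^ (q - 2) * P +
      ((1 + (q - 1) * s ^ q) * b ^ q -
        q * s ^ (q - 1) * b ^ (q - 2) * P) =
      ((q - 1) * (t * a) ^ q + b ^ q - q * (t * a) ^ (q - 1) * b) +
      ((q - 1) * (s * b) ^ q + a ^ q - q * (s * b) ^ (q - 1) * a) +
      q * t ^ (q - 1) * a ^ (q - 2) * (a * b - P) +
      q * s ^ (q - 1) * b ^ (q - 2) * (a * b - P) := by
    rw [hta, hta', hsb, hsb', haq, hbq]; ring
  rw [hE]
  constructor
  · linarith
  constructor
  · -- equality implies proportional gradients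
    intro hzero
    have hT1 : (q - 1) * (t * a) ^ q + b ^ q - q * (t * a) ^ (q - 1) * b = 0 := by
      linarith
    have hC1 : q * t ^ (q - 1) * a ^ (q - 2) * (a * b - P) = 0 := by linarith
    have htab : t * a = b := hT1e.mp hT1
    rcases ha0.lt_or_eq with hapos | hazero
    · -- a > 0
      have hfac : 0 < q * t ^ (q - 1) * a ^ (q - 2) :=
        mul_pos (mul_pos (by linarith) (Real.rpow_pos_of_pos htpos _))
          (Real.rpow_pos_of_pos hapos _)
      have hPab : P = a * b := by
        have := mul_eq_zero.mp hC1
        rcases this with h' | h'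
        · exact absurd h' hfac.ne'
        · linarith
      have hcs : b • G = a • H := inner_eq_norm_mul_iff_real.mp hPab
      -- b = t * a, so (t * a) • G = a • H, hence H = t • G
      have hHtG : H = t • G := by
        have h1 : (t * a) • G = a • H := by rw [htab]; exact hcs
        have h2 : a • (t • G) = a • H := by
          rw [smul_smul]
          rwa [mul_comm a t]
        exact (smul_right_injective _ (by positivity : a ≠ 0) h2).symm
      rw [hHtG, smul_smul, ht]
      congr 1
      field_simp
    · -- a = 0
      have hGz : G = 0 := norm_eq_zero.mp hazero.symm
      have hbz : b = 0 := by rw [← htab, ← hazero, mul_zero]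
      have hHz : H = 0 := norm_eq_zero.mp hbz
      rw [hGz, hHz, smul_zero, smul_zero]
  · -- proportional gradients imply equality
    intro huv
    have hHtG : H = t • G := by
      have : (u x)⁻¹ • (u x • H) = (u x)⁻¹ • (v x • G) := by rw [huv]
      rwa [smul_smul, smul_smul, inv_mul_cancel₀ hu0.ne', one_smul,
        show (u x)⁻¹ * v x = t by rw [ht]; ring] at this
    have hbta : b = t * a := by
      rw [hb, hHtG, norm_smul, Real.norm_eq_abs, abs_of_pos htpos, ha]
    have hPta : P = t * (a * a) := by
      rw [hP, hHtG, real_inner_smul_right, real_inner_self_eq_norm_mul_norm, ha]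
    have hT1 : (q - 1) * (t * a) ^ q + b ^ q - q * (t * a) ^ (q - 1) * b = 0 :=
      hT1e.mpr hbta.symm
    have hT2 : (q - 1) * (s * b) ^ q + a ^ q - q * (s * b) ^ (q - 1) * a = 0 := by
      apply hT2e.mpr
      rw [hbta, ← mul_assoc, mul_comm s t, hts, one_mul]
    have habP : a * b - P = 0 := by rw [hbta, hPta]; ring
    rw [hT1, hT2, habP, mul_zero, mul_zero]
    ring
end
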